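/- Let l ≥ 2, let m be the Haar probability (uniform) measure on G_l = (ℤ/2ℤ)^l, and let λ > 0. The generalized Poisson distribution Π_{λm} with spectral measure λm belongs to TEC(G_l) if and only if λ < ln 3. -/
import Mathlib


open scoped BigOperators

/-- The group `G_l = (ℤ/2ℤ)^l`. -/
abbrev Gl (l : ℕ) : Type := Fin l → ZMod 2

/-- The character pairing `(x,y) = (-1)^(Σᵢ xᵢyᵢ)`. -/
noncomputable def pairingL {l : ℕ} (x y : Gl l) : ℝ :=
  (-1 : ℝ) ^ (∑ i : Fin l, (x i).val * (y i).val)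

/-- A probability measure on `G_l`, given by its mass function. -/
def IsProbL {l : ℕ} (p : Gl l → ℝ) : Prop := (∀ x, 0 ≤ p x) ∧ ∑ x : Gl l, p x = 1

/-- The characteristic function `μ̂(y) = Σ_x (x,y) μ({x})`. -/
noncomputable def charFnL {l : ℕ} (p : Gl l → ℝ) (y : Gl l) : ℝ :=
  ∑ x : Gl l, pairingL x y * p x

/-- `μ` has a trivial equivalence class: every probability measure `ν` with
`|ν̂| = |μ̂|` is a shift `μₓ` of `μ` (central symmetry is the identity on `G_l`). -/
def TECl {l : ℕ} (p : Gl l → ℝ) : Prop :=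
  ∀ q : Gl l → ℝ, IsProbL q → (∀ y : Gl l, |charFnL q y| = |charFnL p y|) →
    ∃ x : Gl l, ∀ e : Gl l, q e = p (e + x)

namespace Stmt13Aux

noncomputable def chi (a : ZMod 2) : ℝ := if a = 0 then 1 else -1

lemma zmod2_cases (a : ZMod 2) : a = 0 ∨ a = 1 := by revert a; decide

lemma chi_add (a b : ZMod 2) : chi (a + b) = chi a * chi b := by
  rcases zmod2_cases a with ha | ha <;> rcases zmod2_cases b with hb | hb <;>
    subst ha <;> subst hb <;>
    simp [chi, (by decide : (1 : ZMod 2) + 1 = 0), (by decide : (1 : ZMod 2) ≠ 0)]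

lemma neg_one_pow_eq_chi (n : ℕ) : (-1 : ℝ) ^ n = chi (n : ZMod 2) := by
  rcases Nat.even_or_odd n with h | h
  · rw [h.neg_one_pow, chi, if_pos]
    exact (ZMod.natCast_eq_zero_iff n 2).mpr h.two_dvd
  · rw [h.neg_one_pow, chi, if_neg]
    intro hd
    rw [ZMod.natCast_eq_zero_iff] at hd
    exact (Nat.not_even_iff_odd.mpr h) (even_iff_two_dvd.mpr hd)

lemma pairingL_eq {l : ℕ} (x y : Gl l) : pairingL x y = chi (∑ i, x i * y i) := by
  rw [pairingL, neg_one_pow_eq_chi]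
  congr 1
  push_cast
  simp [ZMod.natCast_zmod_val]

lemma pairingL_comm {l : ℕ} (x y : Gl l) : pairingL x y = pairingL y x := by
  simp [pairingL_eq, mul_comm]

lemma pairingL_zero_right {l : ℕ} (x : Gl l) : pairingL x 0 = 1 := by
  simp [pairingL_eq, chi]

lemma pairingL_zero_left {l : ℕ} (y : Gl l) : pairingL 0 y = 1 := by
  simp [pairingL_eq, chi]

lemma pairingL_add_left {l : ℕ} (x z y : Gl l) :
    pairingL (x + z) y = pairingL x y * pairingL z y := by
  simp only [pairingL_eq]
  rw [← chi_add]
  congr 1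
  rw [← Finset.sum_add_distrib]
  exact Finset.sum_congr rfl fun i _ => by simp [add_mul]

lemma pairingL_add_right {l : ℕ} (x y z : Gl l) :
    pairingL x (y + z) = pairingL x y * pairingL x z := by
  rw [pairingL_comm, pairingL_add_left, pairingL_comm y x, pairingL_comm z x]

lemma pairingL_cases {l : ℕ} (x y : Gl l) : pairingL x y = 1 ∨ pairingL x y = -1 := by
  rw [pairingL_eq, chi]; split <;> simp

lemma pairingL_mul_self {l : ℕ} (x y : Gl l) : pairingL x y * pairingL x y = 1 := by
  rcases pairingL_cases x y with h | h <;> rw [h] <;> norm_num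

lemma gl_add_self {l : ℕ} (x : Gl l) : x + x = 0 := by
  funext i
  have : ∀ a : ZMod 2, a + a = 0 := by decide
  exact this (x i)

lemma gl_add_eq_zero {l : ℕ} (x z : Gl l) : x + z = 0 ↔ z = x := by
  constructor
  · intro h
    have : x + (x + z) = x + 0 := by rw [h]
    rw [← add_assoc, gl_add_self, zero_add, add_zero] at this
    exact this
  · rintro rfl; exact gl_add_self _

lemma card_gl (l : ℕ) : Fintype.card (Gl l) = 2 ^ l := by
  simp [Fintype.card_fun]

lemma sum_pairingL {l : ℕ} (y : Gl l) :
    ∑ x : Gl l, pairingL x y = if y = 0 then (2 : ℝ) ^ l else 0 := by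
  split
  · subst ‹y = 0›
    simp only [pairingL_zero_right, Finset.sum_const, Finset.card_univ, card_gl,
      nsmul_eq_mul, mul_one]
    push_cast; ring
  · rename_i hy
    obtain ⟨i₀, hi₀⟩ : ∃ i, y i ≠ 0 := by
      by_contra h; push_neg at h; exact hy (funext h)
    set e : Gl l := Pi.single i₀ 1 with he
    have hpe : pairingL e y = -1 := by
      rw [pairingL_eq]
      have : ∑ i, e i * y i = y i₀ := by
        rw [Finset.sum_eq_single i₀]
        · simp [he]
        · intro b _ hb; simp [he, Pi.single_eq_of_ne hb]
        · simp
      rw [this, chi, if_neg hi₀]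
    have key : ∑ x : Gl l, pairingL x y = ∑ x : Gl l, pairingL (x + e) y :=
      Fintype.sum_equiv (Equiv.addRight e) _ _ (fun x => rfl) |>.symm
    have key2 : ∑ x : Gl l, pairingL (x + e) y = -∑ x : Gl l, pairingL x y := by
      rw [← Finset.sum_neg_distrib]
      exact Finset.sum_congr rfl fun x _ => by rw [pairingL_add_left, hpe]; ring
    linarith [key, key2]

lemma sum_pairingL_snd {l : ℕ} (x : Gl l) :
    ∑ y : Gl l, pairingL x y = if x = 0 then (2 : ℝ) ^ l else 0 := by
  simp_rw [pairingL_comm x]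
  exact sum_pairingL x

lemma sum_pairingL_mul {l : ℕ} (y z : Gl l) :
    ∑ x : Gl l, pairingL x y * pairingL x z = if z = y then (2 : ℝ) ^ l else 0 := by
  have : ∀ x : Gl l, pairingL x y * pairingL x z = pairingL x (y + z) := fun x =>
    (pairingL_add_right x y z).symm
  simp_rw [this]
  rw [sum_pairingL (y + z)]
  congr 1
  rw [eq_iff_iff, gl_add_eq_zero]

lemma inversion {l : ℕ} (p : Gl l → ℝ) (x : Gl l) :
    ∑ y : Gl l, pairingL x y * charFnL p y = 2 ^ l * p x := by
  simp only [charFnL, Finset.mul_sum]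
  rw [Finset.sum_comm]
  have : ∀ z : Gl l, ∑ y : Gl l, pairingL x y * (pairingL z y * p z)
      = (if z = x then (2:ℝ)^l else 0) * p z := by
    intro z
    have e1 : ∀ y : Gl l, pairingL x y * (pairingL z y * p z)
        = (pairingL y x * pairingL y z) * p z := fun y => by
      rw [pairingL_comm y x, pairingL_comm y z]; ring
    simp_rw [e1]
    rw [← Finset.sum_mul, sum_pairingL_mul x z]
  simp_rw [this]
  simp [Finset.sum_ite_eq']

end Stmt13Aux

/-- Theorem 1: let `m` be the Haar probability measure on `G_l`
(`l ≥ 2`) and `λ > 0`. The generalized Poisson distribution `Π_{λm}` — the probability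
measure whose characteristic function is `exp(Σ_x ((x,y) − 1)·λ·2^{-l})` — belongs to
`TEC(G_l)` if and only if `λ < ln 3`. -/
theorem stmt13 (l : ℕ) (hl : 2 ≤ l) (lam : ℝ) (hlam : 0 < lam)
    (p : Gl l → ℝ) (hp : IsProbL p)
    (hchar : ∀ y : Gl l,
      charFnL p y = Real.exp (∑ x : Gl l, (pairingL x y - 1) * (lam * (2 ^ l)⁻¹))) :
    TECl p ↔ lam < Real.log 3 := by
  classical
  have h2l : (0:ℝ) < 2 ^ l := by positivity
  have h2lne : ((2:ℝ) ^ l) ≠ 0 := ne_of_gt h2l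
  have h4le : (4:ℝ) ≤ 2 ^ l := by
    calc (4:ℝ) = 2 ^ 2 := by norm_num
    _ ≤ 2 ^ l := by exact pow_le_pow_right₀ (by norm_num) hl
  set c : ℝ := Real.exp (-lam) with hcdef
  have hc0 : 0 < c := Real.exp_pos _
  -- characteristic function of p
  have hpchar : ∀ y : Gl l, charFnL p y = if y = 0 then 1 else c := by
    intro y
    rw [hchar y]
    have e0 : ∑ x : Gl l, (pairingL x y - 1) * (lam * (2 ^ l)⁻¹)
        = ((if y = 0 then (2:ℝ)^l else 0) - 2 ^ l) * (lam * (2 ^ l)⁻¹) := by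
      rw [← Finset.sum_mul]
      congr 1
      rw [Finset.sum_sub_distrib, Stmt13Aux.sum_pairingL y]
      simp [Finset.card_univ, Stmt13Aux.card_gl]
    rw [e0]
    by_cases h : y = 0
    · simp [h]
    · rw [if_neg h, if_neg h, hcdef]
      congr 1
      field_simp
      ring
  -- explicit form of p
  have hpval : ∀ x : Gl l, p x
      = (2 ^ l : ℝ)⁻¹ * ((1 - c) + c * (if x = 0 then (2:ℝ)^l else 0)) := by
    intro x
    have hinv := Stmt13Aux.inversion p x
    have key : ∑ y : Gl l, pairingL x y * charFnL p y
        = (1 - c) + c * (if x = 0 then (2:ℝ)^l else 0) := by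
      have e1 : ∀ y : Gl l, pairingL x y * charFnL p y
          = (1 - c) * (if y = 0 then pairingL x y else 0) + c * pairingL x y := by
        intro y
        rw [hpchar y]
        by_cases h : y = 0
        · simp only [if_pos h]; ring
        · simp only [if_neg h]; ring
      rw [Finset.sum_congr rfl fun y _ => e1 y]
      rw [Finset.sum_add_distrib, ← Finset.mul_sum, ← Finset.mul_sum,
        Finset.sum_ite_eq' Finset.univ (0 : Gl l) (fun y => pairingL x y),
        Stmt13Aux.sum_pairingL_snd x]
      simp [Stmt13Aux.pairingL_zero_right]
    rw [key] at hinv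
    have h' : (2:ℝ)^l * p x = _ := hinv.symm
    rw [← h']
    exact (inv_mul_cancel_left₀ h2lne (p x)).symm
  constructor
  · -- TEC → lam < log 3
    intro htec
    by_contra hnot
    push_neg at hnot
    have hc3 : c ≤ 3⁻¹ := by
      rw [hcdef]
      calc Real.exp (-lam) ≤ Real.exp (-Real.log 3) :=
            Real.exp_le_exp.mpr (by linarith)
      _ = 3⁻¹ := by rw [Real.exp_neg, Real.exp_log (by norm_num : (0:ℝ) < 3)]
    set i₀ : Fin l := ⟨0, by omega⟩ with hi₀
    set y₀ : Gl l := Pi.single i₀ 1 with hy₀def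
    have hy₀ : y₀ ≠ 0 := by
      intro h
      have := congrFun h i₀
      simp only [hy₀def, Pi.single_eq_same, Pi.zero_apply] at this
      exact (by decide : (1 : ZMod 2) ≠ 0) this
    have hpy₀ : pairingL y₀ y₀ = -1 := by
      rw [Stmt13Aux.pairingL_eq]
      have : ∑ i, y₀ i * y₀ i = 1 := by
        rw [Finset.sum_eq_single i₀]
        · simp [hy₀def]
        · intro b _ hb; simp [hy₀def, Pi.single_eq_of_ne hb]
        · simp
      rw [this, Stmt13Aux.chi, if_neg (by decide : (1 : ZMod 2) ≠ 0)]
    set k : ℝ := 2 * (2 ^ l : ℝ)⁻¹ * c with hkdef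
    set q : Gl l → ℝ := fun x => p x - k * pairingL x y₀ with hqdef
    have hqchar : ∀ y : Gl l, charFnL q y
        = charFnL p y - (if y = y₀ then 2 * c else 0) := by
      intro y
      have e1 : ∀ x : Gl l, pairingL x y * q x
          = pairingL x y * p x - k * (pairingL x y * pairingL x y₀) := by
        intro x; simp only [hqdef]; ring
      show (∑ x : Gl l, pairingL x y * q x) = _
      rw [Finset.sum_congr rfl fun x _ => e1 x, Finset.sum_sub_distrib,
        ← Finset.mul_sum, Stmt13Aux.sum_pairingL_mul y y₀]
      show charFnL p y - _ = charFnL p y - _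
      congr 1
      by_cases h : y = y₀
      · rw [if_pos (by rw [h]), if_pos h, hkdef]
        field_simp
      · rw [if_neg (fun hh => h hh.symm), if_neg h, mul_zero]
    have habs : ∀ y : Gl l, |charFnL q y| = |charFnL p y| := by
      intro y
      rw [hqchar y]
      by_cases h : y = y₀
      · rw [if_pos h, h, hpchar y₀, if_neg hy₀]
        rw [show c - 2 * c = -c by ring, abs_neg]
      · rw [if_neg h, sub_zero]
    have hqprob : IsProbL q := by
      constructor
      · intro x
        have hpv := hpval x
        have hpr : pairingL x y₀ ≤ 1 := by
          rcases Stmt13Aux.pairingL_cases x y₀ with h | h <;> rw [h] <;> norm_num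
        have hite : (0:ℝ) ≤ (if x = 0 then (2:ℝ)^l else 0) := by positivity
        have hinv0 : (0:ℝ) < (2 ^ l : ℝ)⁻¹ := by positivity
        simp only [hqdef, hkdef]
        rw [hpv]
        nlinarith [mul_le_mul_of_nonneg_left hpr (le_of_lt (mul_pos (mul_pos two_pos hinv0) hc0)),
          mul_nonneg (le_of_lt hinv0) (mul_nonneg (le_of_lt hc0) hite),
          mul_pos hinv0 hc0]
      · have e1 : ∀ x : Gl l, q x = p x - k * pairingL x y₀ := fun x => rfl
        rw [Finset.sum_congr rfl fun x _ => e1 x, Finset.sum_sub_distrib, hp.2,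
          ← Finset.mul_sum, Stmt13Aux.sum_pairingL y₀, if_neg hy₀, mul_zero, sub_zero]
    obtain ⟨x₀, hx₀⟩ := htec q hqprob habs
    have hq_y₀ : q y₀ = (2 ^ l : ℝ)⁻¹ * (1 + c) := by
      show p y₀ - k * pairingL y₀ y₀ = _
      rw [hpy₀, hpval y₀, if_neg hy₀, hkdef]
      ring
    have := hx₀ y₀
    rw [hq_y₀, hpval (y₀ + x₀)] at this
    by_cases h : y₀ + x₀ = 0
    · rw [if_pos h] at this
      have h1 : (1:ℝ) + c = (1 - c) + c * 2 ^ l := by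
        have := mul_left_cancel₀ (inv_ne_zero h2lne) this
        linarith
      nlinarith
    · rw [if_neg h] at this
      have h1 : (1:ℝ) + c = 1 - c := by
        have := mul_left_cancel₀ (inv_ne_zero h2lne) this
        linarith
      nlinarith
  · -- lam < log 3 → TEC
    intro hlt q hq habs
    have hc3 : (3:ℝ)⁻¹ < c := by
      rw [hcdef]
      calc (3:ℝ)⁻¹ = Real.exp (-Real.log 3) := by
            rw [Real.exp_neg, Real.exp_log (by norm_num : (0:ℝ) < 3)]
      _ < Real.exp (-lam) := Real.exp_lt_exp.mpr (by linarith)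
    have hppos : ∀ y : Gl l, 0 < charFnL p y := by
      intro y; rw [hpchar y]; split <;> [norm_num; exact hc0]
    set ε : Gl l → ℝ := fun y => charFnL q y / charFnL p y with hεdef
    have hqhat : ∀ y : Gl l, charFnL q y = ε y * charFnL p y := by
      intro y
      simp only [hεdef]
      rw [div_mul_cancel₀ _ (ne_of_gt (hppos y))]
    have hεcases : ∀ y : Gl l, ε y = 1 ∨ ε y = -1 := by
      intro y
      have habs1 : |ε y| = 1 := by
        simp only [hεdef]
        rw [abs_div, habs y, div_self (ne_of_gt (abs_pos.mpr (ne_of_gt (hppos y))))]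
      exact (abs_eq (by norm_num)).mp habs1
    have hq0 : charFnL q 0 = 1 := by
      show (∑ x : Gl l, pairingL x 0 * q x) = 1
      rw [Finset.sum_congr rfl fun x _ => by
        rw [Stmt13Aux.pairingL_zero_right, one_mul]]
      exact hq.2
    have hε0 : ε 0 = 1 := by
      simp only [hεdef]
      rw [hq0, hpchar 0, if_pos rfl, div_one]
    set F : Gl l → ℝ := fun x => ∑ y : Gl l, ε y * pairingL x y with hFdef
    have hqF : ∀ x : Gl l, (2:ℝ)^l * q x = (1 - c) + c * F x := by
      intro x
      rw [← Stmt13Aux.inversion q x]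
      have e1 : ∀ y : Gl l, pairingL x y * charFnL q y
          = (1-c) * (if y = 0 then ε y * pairingL x y else 0)
            + c * (ε y * pairingL x y) := by
        intro y
        rw [hqhat y, hpchar y]
        by_cases h : y = 0
        · simp only [if_pos h]; ring
        · simp only [if_neg h]; ring
      rw [Finset.sum_congr rfl fun y _ => e1 y]
      rw [Finset.sum_add_distrib, ← Finset.mul_sum, ← Finset.mul_sum,
        Finset.sum_ite_eq' Finset.univ (0 : Gl l) (fun y => ε y * pairingL x y)]
      simp only [Finset.mem_univ, if_pos, hε0, Stmt13Aux.pairingL_zero_right,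
        one_mul, mul_one, hFdef]
    have hFlb : ∀ x : Gl l, -2 < F x := by
      intro x
      nlinarith [mul_nonneg (le_of_lt h2l) (hq.1 x), hqF x, hc3, hc0]
    have hFnn : ∀ x : Gl l, 0 ≤ F x := by
      intro x
      have hterm : ∀ y : Gl l, ε y * pairingL x y = 1 ∨ ε y * pairingL x y = -1 := by
        intro y
        rcases hεcases y with h | h <;> rcases Stmt13Aux.pairingL_cases x y with h' | h' <;>
          rw [h, h'] <;> norm_num
      set A := Finset.univ.filter (fun y : Gl l => ε y * pairingL x y = 1) with hA
      have hFcard : F x = 2 * (A.card : ℝ) - (2:ℝ)^l := by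
        have e1 : ∀ y : Gl l, ε y * pairingL x y
            = 2 * (if ε y * pairingL x y = 1 then (1:ℝ) else 0) - 1 := by
          intro y; rcases hterm y with h | h <;> rw [h] <;> norm_num
        show (∑ y : Gl l, ε y * pairingL x y) = _
        rw [Finset.sum_congr rfl fun y _ => e1 y, Finset.sum_sub_distrib,
          ← Finset.mul_sum, Finset.sum_boole]
        simp only [Finset.sum_const, Finset.card_univ, Stmt13Aux.card_gl,
          nsmul_eq_mul, mul_one, hA]
        push_cast
        ring
      obtain ⟨m, hm⟩ : Even (2 ^ l) := Nat.even_pow.mpr ⟨even_two, by omega⟩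
      have hlt2 : (2:ℕ)^l < 2 * A.card + 2 := by
        have hr : ((2:ℕ)^l : ℝ) < ((2 * A.card + 2 : ℕ) : ℝ) := by
          push_cast
          have := hFlb x
          rw [hFcard] at this
          linarith
        exact_mod_cast hr
      have hle : (2:ℕ)^l ≤ 2 * A.card := by omega
      have hler : ((2:ℕ)^l : ℝ) ≤ ((2 * A.card : ℕ) : ℝ) := by exact_mod_cast hle
      push_cast at hler
      rw [hFcard]
      linarith
    have hFsum : ∑ x : Gl l, F x = (2:ℝ)^l := by
      simp only [hFdef]
      rw [Finset.sum_comm]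
      have e1 : ∀ y : Gl l, ∑ x : Gl l, ε y * pairingL x y
          = if y = 0 then (2:ℝ)^l * ε y else 0 := by
        intro y
        rw [← Finset.mul_sum, Stmt13Aux.sum_pairingL y]
        by_cases h : y = 0
        · rw [if_pos h, if_pos h]; ring
        · rw [if_neg h, if_neg h, mul_zero]
      rw [Finset.sum_congr rfl fun y _ => e1 y,
        Finset.sum_ite_eq' Finset.univ (0 : Gl l) (fun y => (2:ℝ)^l * ε y)]
      simp [hε0]
    have hFhat : ∀ w : Gl l, ∑ x : Gl l, pairingL x w * F x = (2:ℝ)^l * ε w := by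
      intro w
      have e0 : ∀ x : Gl l, pairingL x w * F x
          = ∑ y : Gl l, ε y * (pairingL x w * pairingL x y) := by
        intro x
        simp only [hFdef]
        rw [Finset.mul_sum]
        exact Finset.sum_congr rfl fun y _ => by ring
      rw [Finset.sum_congr rfl fun x _ => e0 x, Finset.sum_comm]
      have e1 : ∀ y : Gl l, ∑ x : Gl l, ε y * (pairingL x w * pairingL x y)
          = if y = w then (2:ℝ)^l * ε y else 0 := by
        intro y
        rw [← Finset.mul_sum, Stmt13Aux.sum_pairingL_mul w y]
        by_cases h : y = w
        · rw [if_pos h, if_pos h]; ring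
        · rw [if_neg h, if_neg h, mul_zero]
      rw [Finset.sum_congr rfl fun y _ => e1 y,
        Finset.sum_ite_eq' Finset.univ w (fun y => (2:ℝ)^l * ε y)]
      simp
    have hpars : ∑ x : Gl l, F x * F x = (2:ℝ)^l * (2:ℝ)^l := by
      have e0 : ∀ x : Gl l, F x * F x
          = ∑ y : Gl l, ε y * (pairingL x y * F x) := by
        intro x
        conv_lhs => rw [show F x = ∑ y : Gl l, ε y * pairingL x y from rfl]
        rw [Finset.sum_mul]
        exact Finset.sum_congr rfl fun y _ => by ring
      rw [Finset.sum_congr rfl fun x _ => e0 x, Finset.sum_comm]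
      have e1 : ∀ y : Gl l, ∑ x : Gl l, ε y * (pairingL x y * F x) = (2:ℝ)^l := by
        intro y
        rw [← Finset.mul_sum]
        have : ∑ x : Gl l, pairingL x y * F x = (2:ℝ)^l * ε y := hFhat y
        rw [this]
        rcases hεcases y with h | h <;> rw [h] <;> ring
      rw [Finset.sum_congr rfl fun y _ => e1 y]
      rw [Finset.sum_const, Finset.card_univ, Stmt13Aux.card_gl, nsmul_eq_mul]
      push_cast
      ring
    have hFub : ∀ x : Gl l, F x ≤ (2:ℝ)^l := by
      intro x
      rw [← hFsum]
      exact Finset.single_le_sum (fun i _ => hFnn i) (Finset.mem_univ x)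
    have hdich : ∀ x : Gl l, F x = 0 ∨ F x = (2:ℝ)^l := by
      have hzero : ∑ x : Gl l, F x * ((2:ℝ)^l - F x) = 0 := by
        have e1 : ∀ x : Gl l, F x * ((2:ℝ)^l - F x) = F x * (2:ℝ)^l - F x * F x :=
          fun x => by ring
        rw [Finset.sum_congr rfl fun x _ => e1 x, Finset.sum_sub_distrib,
          ← Finset.sum_mul, hFsum, hpars, sub_self]
      intro x
      have := (Finset.sum_eq_zero_iff_of_nonneg
        (fun z _ => mul_nonneg (hFnn z) (sub_nonneg.mpr (hFub z)))).mp hzero x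
        (Finset.mem_univ x)
      rcases mul_eq_zero.mp this with h | h
      · exact Or.inl h
      · exact Or.inr (by linarith)
    obtain ⟨x₀, hx₀val⟩ : ∃ x₀ : Gl l, F x₀ = (2:ℝ)^l := by
      by_contra hno
      push_neg at hno
      have hall : ∀ x : Gl l, F x = 0 := fun x => (hdich x).resolve_right (hno x)
      have : (2:ℝ)^l = 0 := by
        rw [← hFsum]; exact Finset.sum_eq_zero fun x _ => hall x
      linarith
    have huniq : ∀ x : Gl l, x ≠ x₀ → F x = 0 := by
      intro x hx
      rcases hdich x with h | h
      · exact h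
      · exfalso
        have hsub : F x + F x₀ ≤ ∑ z : Gl l, F z := by
          rw [← Finset.sum_pair hx]
          exact Finset.sum_le_sum_of_subset_of_nonneg (Finset.subset_univ _)
            (fun z _ _ => hFnn z)
        rw [hFsum, h, hx₀val] at hsub
        linarith
    have hεval : ∀ w : Gl l, ε w = pairingL x₀ w := by
      intro w
      have hFite : ∀ x : Gl l, F x = if x = x₀ then (2:ℝ)^l else 0 := by
        intro x
        by_cases h : x = x₀
        · rw [if_pos h, h, hx₀val]
        · rw [if_neg h]; exact huniq x h
      have h1 := hFhat w
      rw [Finset.sum_congr rfl (fun x _ => by rw [hFite x])] at h1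
      have h2 : ∑ x : Gl l, pairingL x w * (if x = x₀ then (2:ℝ)^l else 0)
          = pairingL x₀ w * (2:ℝ)^l := by
        rw [Finset.sum_congr rfl (fun x _ => by
          rw [mul_ite, mul_zero]),
          Finset.sum_ite_eq' Finset.univ x₀ (fun x => pairingL x w * (2:ℝ)^l)]
        simp
      rw [h2] at h1
      have : (2:ℝ)^l * ε w = (2:ℝ)^l * pairingL x₀ w := by rw [← h1]; ring
      exact mul_left_cancel₀ h2lne this
    refine ⟨x₀, fun e => ?_⟩
    have h1 := Stmt13Aux.inversion q e
    have h2 := Stmt13Aux.inversion p (e + x₀)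
    have key : ∑ y : Gl l, pairingL e y * charFnL q y
        = ∑ y : Gl l, pairingL (e + x₀) y * charFnL p y := by
      refine Finset.sum_congr rfl fun y _ => ?_
      rw [hqhat y, hεval y, Stmt13Aux.pairingL_add_left]
      ring
    rw [h1, h2] at key
    exact mul_left_cancel₀ h2lne key
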